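/- arXiv:2505.18599 — 5 statements merged into one kernel-verified Lean document; each statement's English description precedes it below -/
import Mathlib

section
/- Define characters χ_{η,φ} : Z^n × Z^n → K^× by χ_{η,φ}(η',φ') = ⟨ω'_η, ω_{φ'}⟩⟨ω'_{η'}, ω_φ⟩ where ⟨ω'_i, ω_j⟩ = q^{d_j a_{ji}} q_{ji}, extended bimultiplicatively, with q, q_{ij} (i<j) algebraically independent non-roots of unity and DA invertible over Q. Then χ_{η,φ} = χ_{η',φ'} implies (η,φ) = (η',φ'). -/
/-- The pairing `⟨ω'_η, ω_φ⟩ = ∏_{i,j} (q^{d_j a_{ji}} q_{ji})^{η_i φ_j}`. -/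
noncomputable def OYpair {K : Type*} [Field K] (n : ℕ) (q : Kˣ) (qm : Fin n → Fin n → Kˣ)
    (d : Fin n → ℤ) (A : Matrix (Fin n) (Fin n) ℤ) (η φ : Fin n → ℤ) : Kˣ :=
  ∏ i, ∏ j, (q ^ (d j * A j i) * qm j i) ^ (η i * φ j)

section Aux

variable {K : Type*} [Field K]

lemma oy_prod_zpow {ι : Type*} (g : Kˣ) (s : Finset ι) (f : ι → ℤ) :
    ∏ i ∈ s, g ^ f i = g ^ ∑ i ∈ s, f i := by
  induction s using Finset.cons_induction with
  | empty => simp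
  | cons a s ha ih => simp [Finset.prod_cons, Finset.sum_cons, ih, zpow_add]

lemma OYpair_eq (n : ℕ) (q : Kˣ) (qm : Fin n → Fin n → Kˣ)
    (d : Fin n → ℤ) (A : Matrix (Fin n) (Fin n) ℤ) (η φ : Fin n → ℤ) :
    OYpair n q qm d A η φ =
      q ^ (∑ i, ∑ j, d j * A j i * (η i * φ j)) *
        ∏ i, ∏ j, qm j i ^ (η i * φ j) := by
  unfold OYpair
  simp_rw [mul_zpow, ← zpow_mul, Finset.prod_mul_distrib, oy_prod_zpow]

lemma OYpair_sub_left (n : ℕ) (q : Kˣ) (qm : Fin n → Fin n → Kˣ)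
    (d : Fin n → ℤ) (A : Matrix (Fin n) (Fin n) ℤ) (η η' φ : Fin n → ℤ) :
    OYpair n q qm d A (η - η') φ =
      OYpair n q qm d A η φ / OYpair n q qm d A η' φ := by
  unfold OYpair
  simp_rw [Pi.sub_apply, sub_mul, zpow_sub, Finset.prod_mul_distrib,
    Finset.prod_inv_distrib, ← div_eq_mul_inv]

lemma OYpair_sub_right (n : ℕ) (q : Kˣ) (qm : Fin n → Fin n → Kˣ)
    (d : Fin n → ℤ) (A : Matrix (Fin n) (Fin n) ℤ) (η φ φ' : Fin n → ℤ) :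
    OYpair n q qm d A η (φ - φ') =
      OYpair n q qm d A η φ / OYpair n q qm d A η φ' := by
  unfold OYpair
  simp_rw [Pi.sub_apply, mul_sub, zpow_sub, Finset.prod_mul_distrib,
    Finset.prod_inv_distrib, ← div_eq_mul_inv]

lemma oy_keyL {n : ℕ} {q : Kˣ} {qm : Fin n → Fin n → Kˣ}
    (hqdiag : ∀ i, qm i i = 1) (hqskew : ∀ i j, qm i j * qm j i = 1)
    (hind : ∀ (a : ℤ) (b : Fin n → Fin n → ℤ),
      q ^ a * ∏ i, ∏ j, (if i < j then qm i j ^ b i j else 1) = 1 →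
      a = 0 ∧ ∀ i j, i < j → b i j = 0)
    (a : ℤ) (c : Fin n → Fin n → ℤ)
    (h : q ^ a * ∏ i, ∏ j, qm i j ^ c i j = 1) : a = 0 := by
  have hinv : ∀ i j : Fin n, qm j i = (qm i j)⁻¹ := by
    intro i j
    exact eq_inv_of_mul_eq_one_left (by rw [mul_comm]; exact hqskew i j)
  have hstep : ∀ i j : Fin n, qm i j ^ c i j =
      (if i < j then qm i j ^ c i j else 1) * (if j < i then qm i j ^ c i j else 1) := by
    intro i j
    rcases lt_trichotomy i j with hlt | heq | hgt
    · simp [hlt, hlt.asymm]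
    · subst heq; simp [hqdiag]
    · simp [hgt, hgt.asymm]
  have h2 : ∏ i, ∏ j, qm i j ^ c i j =
      ∏ i, ∏ j, (if i < j then qm i j ^ (c i j - c j i) else 1) := by
    calc ∏ i, ∏ j, qm i j ^ c i j
        = (∏ i, ∏ j, (if i < j then qm i j ^ c i j else 1)) *
          (∏ i, ∏ j, (if j < i then qm i j ^ c i j else 1)) := by
          rw [← Finset.prod_mul_distrib]
          refine Finset.prod_congr rfl fun i _ => ?_
          rw [← Finset.prod_mul_distrib]
          exact Finset.prod_congr rfl fun j _ => hstep i j
      _ = (∏ i, ∏ j, (if i < j then qm i j ^ c i j else 1)) *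
          (∏ i, ∏ j, (if i < j then qm i j ^ (-(c j i)) else 1)) := by
          congr 1
          rw [Finset.prod_comm]
          refine Finset.prod_congr rfl fun i _ => Finset.prod_congr rfl fun j _ => ?_
          by_cases hij : i < j
          · simp only [hij, if_true, hinv i j, inv_zpow, ← zpow_neg]
          · simp [hij]
      _ = ∏ i, ∏ j, (if i < j then qm i j ^ (c i j - c j i) else 1) := by
          rw [← Finset.prod_mul_distrib]
          refine Finset.prod_congr rfl fun i _ => ?_
          rw [← Finset.prod_mul_distrib]
          refine Finset.prod_congr rfl fun j _ => ?_
          by_cases hij : i < j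
          · simp only [hij, if_true, ← zpow_add, sub_eq_add_neg]
          · simp [hij]
  rw [h2] at h
  exact (hind a (fun i j => c i j - c j i) h).1

end Aux

/-- the characters `χ_{η,φ}(η',φ') = ⟨ω'_η, ω_{φ'}⟩⟨ω'_{η'}, ω_φ⟩` are
pairwise distinct: `χ_{η,φ} = χ_{η'',φ''}` implies `(η,φ) = (η'',φ'')`. -/
theorem stmt4 {K : Type*} [Field K] (n : ℕ) (q : Kˣ) (qm : Fin n → Fin n → Kˣ)
    (hqdiag : ∀ i, qm i i = 1) (hqskew : ∀ i j, qm i j * qm j i = 1)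
    (hind : ∀ (a : ℤ) (b : Fin n → Fin n → ℤ),
      q ^ a * ∏ i, ∏ j, (if i < j then qm i j ^ b i j else 1) = 1 →
      a = 0 ∧ ∀ i j, i < j → b i j = 0)
    (d : Fin n → ℤ) (hd : ∀ i, 0 < d i)
    (A : Matrix (Fin n) (Fin n) ℤ) (hsym : ∀ i j, d i * A i j = d j * A j i)
    (hDA : (Matrix.of fun i j => d i * A i j).det ≠ 0)
    (η φ η' φ' : Fin n → ℤ)
    (h : ∀ ζ ψ : Fin n → ℤ,
      OYpair n q qm d A η ψ * OYpair n q qm d A ζ φ =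
      OYpair n q qm d A η' ψ * OYpair n q qm d A ζ φ') :
    η = η' ∧ φ = φ' := by
  have hzeroL : ∀ ρ : Fin n → ℤ, OYpair n q qm d A 0 ρ = 1 := by
    intro ρ; simp [OYpair]
  have hzeroR : ∀ ρ : Fin n → ℤ, OYpair n q qm d A ρ 0 = 1 := by
    intro ρ; simp [OYpair]
  -- the difference characters vanish
  have hL : ∀ ψ : Fin n → ℤ, OYpair n q qm d A (η - η') ψ = 1 := by
    intro ψ
    have := h 0 ψ
    rw [hzeroL φ, hzeroL φ', mul_one, mul_one] at this
    rw [OYpair_sub_left, this, div_self']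
  have hR : ∀ ζ : Fin n → ℤ, OYpair n q qm d A ζ (φ - φ') = 1 := by
    intro ζ
    have := h ζ 0
    rw [hzeroR η, hzeroR η', one_mul, one_mul] at this
    rw [OYpair_sub_right, this, div_self']
  -- extract the q-exponents
  have hLq : ∀ ψ : Fin n → ℤ, ∑ i, ∑ j, d j * A j i * ((η - η') i * ψ j) = 0 := by
    intro ψ
    refine oy_keyL hqdiag hqskew hind _ (fun i j => (η - η') j * ψ i) ?_
    show q ^ _ * ∏ i, ∏ j, qm i j ^ ((η - η') j * ψ i) = 1
    rw [Finset.prod_comm, ← OYpair_eq, hL ψ]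
  have hRq : ∀ ζ : Fin n → ℤ, ∑ i, ∑ j, d j * A j i * (ζ i * (φ - φ') j) = 0 := by
    intro ζ
    refine oy_keyL hqdiag hqskew hind _ (fun i j => ζ j * (φ - φ') i) ?_
    show q ^ _ * ∏ i, ∏ j, qm i j ^ (ζ j * (φ - φ') i) = 1
    rw [Finset.prod_comm, ← OYpair_eq, hR ζ]
  constructor
  · have hmv : (Matrix.of fun i j => d i * A i j).mulVec (η - η') = 0 := by
      funext k
      have := hLq (Pi.single k 1)
      simp only [Pi.single_apply, mul_ite, mul_one, mul_zero, Finset.sum_ite_eq,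
        Finset.mem_univ, if_true] at this
      simpa [Matrix.mulVec, dotProduct, mul_assoc] using this
    have := Matrix.eq_zero_of_mulVec_eq_zero hDA hmv
    exact sub_eq_zero.mp this
  · have hmv : (Matrix.of fun i j => d i * A i j).transpose.mulVec (φ - φ') = 0 := by
      funext k
      have := hRq (Pi.single k 1)
      simp only [Pi.single_apply, ite_mul, one_mul, zero_mul, mul_ite, mul_zero,
        Finset.sum_ite_eq, Finset.mem_univ, if_true] at this
      simpa [Matrix.mulVec, dotProduct, Matrix.transpose, mul_assoc] using this
    have hDA' : (Matrix.of fun i j => d i * A i j).transpose.det ≠ 0 := by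
      rwa [Matrix.det_transpose]
    have := Matrix.eq_zero_of_mulVec_eq_zero hDA' hmv
    exact sub_eq_zero.mp this
end

section
/- Define ϱ^{λ,μ}(ω'_η ω_φ) = q^{(φ-η)^T D A λ} (∏_{i,j} q_{ij}^{-λ_i(φ+η)_j}) · q^{(η+φ, μ)} for λ, μ ∈ Z^n, with q, {q_{ij}: i<j} algebraically independent non-roots of unity and DA invertible. If ϱ^{λ,μ}(ω'_η ω_φ) = 1 for all λ, μ ∈ Z^n, then η = φ = 0. -/
private lemma auxV {n : ℕ} (M : Matrix (Fin n) (Fin n) ℤ) (hM : M.det ≠ 0) (v : Fin n → ℤ)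
    (h : ∀ μ : Fin n → ℤ, ∑ i, ∑ j, v i * (M i j * μ j) = 0) : v = 0 := by
  have hv : Matrix.vecMul v M = 0 := by
    funext k
    have h0 := h (Pi.single k 1)
    simp only [Pi.single_apply, mul_ite, mul_one, mul_zero,
      Finset.sum_ite_eq', Finset.mem_univ, if_true] at h0
    simpa [Matrix.vecMul, dotProduct] using h0
  have h2 : Matrix.vecMul v (M * M.adjugate) = 0 := by
    rw [← Matrix.vecMul_vecMul, hv]
    simp
  rw [Matrix.mul_adjugate] at h2
  have h3 : M.det • v = 0 := by
    simpa [Matrix.smul_vecMul] using h2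
  rcases smul_eq_zero.mp h3 with h4 | h4
  · exact absurd h4 hM
  · exact h4

/-- `ϱ^{λ,μ}(ω'_η ω_φ) = q^{(φ-η)ᵀDAλ} (∏_{i,j} q_{ij}^{-λ_i(φ+η)_j}) q^{(η+φ,μ)}`,
with `(·,·)` the form with Gram matrix `DA`. -/
noncomputable def rhoLM {K : Type*} [Field K] (n : ℕ) (q : Kˣ) (qm : Fin n → Fin n → Kˣ)
    (d : Fin n → ℤ) (A : Matrix (Fin n) (Fin n) ℤ) (lam mu η φ : Fin n → ℤ) : Kˣ :=
  q ^ (∑ i, ∑ j, (φ i - η i) * (d i * A i j * lam j)) *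
    (∏ i, ∏ j, qm i j ^ (-(lam i) * (φ j + η j))) *
    q ^ (∑ i, ∑ j, (η i + φ i) * (d i * A i j * mu j))

/-- if `ϱ^{λ,μ}(ω'_η ω_φ) = 1` for all `λ, μ`, then `η = φ = 0`. -/
theorem stmt6 {K : Type*} [Field K] (n : ℕ) (q : Kˣ) (qm : Fin n → Fin n → Kˣ)
    (hqdiag : ∀ i, qm i i = 1) (hqskew : ∀ i j, qm i j * qm j i = 1)
    (hind : ∀ (a : ℤ) (b : Fin n → Fin n → ℤ),
      q ^ a * ∏ i, ∏ j, (if i < j then qm i j ^ b i j else 1) = 1 →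
      a = 0 ∧ ∀ i j, i < j → b i j = 0)
    (d : Fin n → ℤ) (hd : ∀ i, 0 < d i)
    (A : Matrix (Fin n) (Fin n) ℤ) (hsym : ∀ i j, d i * A i j = d j * A j i)
    (hDA : (Matrix.of fun i j => d i * A i j).det ≠ 0)
    (η φ : Fin n → ℤ)
    (h : ∀ lam mu : Fin n → ℤ, rhoLM n q qm d A lam mu η φ = 1) :
    η = 0 ∧ φ = 0 := by
  set M : Matrix (Fin n) (Fin n) ℤ := Matrix.of fun i j => d i * A i j with hMdef
  -- Step 1: η + φ = 0
  have hsum : (η + φ) = 0 := by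
    apply auxV M hDA
    intro μ
    have h0 := h 0 μ
    unfold rhoLM at h0
    simp only [Pi.zero_apply, mul_zero, neg_zero, zero_mul, zpow_zero,
      Finset.sum_const_zero, Finset.prod_const_one, one_mul, mul_one] at h0
    have := (hind (∑ i, ∑ j, (η i + φ i) * (d i * A i j * μ j)) (fun _ _ => 0)
      (by simpa using h0)).1
    simpa [hMdef, Matrix.of_apply] using this
  have hsum' : ∀ j, η j + φ j = 0 := fun j => congrFun hsum j
  -- Step 2: φ - η = 0
  have hdiff : (φ - η) = 0 := by
    apply auxV M hDA
    intro lam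
    have h0 := h lam 0
    unfold rhoLM at h0
    simp only [Pi.zero_apply, mul_zero, Finset.sum_const_zero, zpow_zero, mul_one] at h0
    have hprod : ∀ i j, qm i j ^ (-(lam i) * (φ j + η j)) = 1 := by
      intro i j
      have : φ j + η j = 0 := by have := hsum' j; omega
      simp [this]
    simp only [hprod, Finset.prod_const_one, mul_one] at h0
    have := (hind (∑ i, ∑ j, (φ i - η i) * (d i * A i j * lam j)) (fun _ _ => 0)
      (by simpa using h0)).1
    simpa [hMdef, Matrix.of_apply] using this
  have hdiff' : ∀ j, φ j - η j = 0 := fun j => congrFun hdiff j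
  constructor <;> funext j <;> (have h1 := hsum' j; have h2 := hdiff' j; simp; omega)
end

section
/- With ϱ^{λ,μ} as above, define κ_{η,φ} : Z^n × Z^n → K^× by κ_{η,φ}(λ,μ) = ϱ^{λ,μ}(ω'_η ω_φ). If u = Σ_{(η,φ)} k_{η,φ} ω'_η ω_φ (finite sum in the group algebra of Z^n × Z^n over K) satisfies ϱ^{λ,μ}(u) = 0 for all λ, μ ∈ Z^n, then u = 0. -/
section Aux

variable {K : Type*} [Field K] {n : ℕ} {q : Kˣ} {qm : Fin n → Fin n → Kˣ}

private lemma stmt7_sum_split (n : ℕ) (v : Fin n → ℤ) (w : Fin n → Fin n → ℤ)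
    (l1 l2 : Fin n → ℤ) :
    (∑ i, ∑ j, v i * (w i j * (l1 j + l2 j)))
      = (∑ i, ∑ j, v i * (w i j * l1 j)) + ∑ i, ∑ j, v i * (w i j * l2 j) := by
  simp [mul_add, Finset.sum_add_distrib]

private lemma stmt7_prod_split (n : ℕ) (qm : Fin n → Fin n → Kˣ) (c l1 l2 : Fin n → ℤ) :
    (∏ i, ∏ j, qm i j ^ (-(l1 i + l2 i) * c j))
      = (∏ i, ∏ j, qm i j ^ (-(l1 i) * c j)) * ∏ i, ∏ j, qm i j ^ (-(l2 i) * c j) := by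
  rw [← Finset.prod_mul_distrib]
  refine Finset.prod_congr rfl fun i _ => ?_
  rw [← Finset.prod_mul_distrib]
  refine Finset.prod_congr rfl fun j _ => ?_
  rw [← zpow_add]; ring_nf

private lemma stmt7_rhoLM_mul (n : ℕ) (q : Kˣ) (qm : Fin n → Fin n → Kˣ)
    (d : Fin n → ℤ) (A : Matrix (Fin n) (Fin n) ℤ) (l1 l2 m1 m2 η φ : Fin n → ℤ) :
    rhoLM n q qm d A (l1 + l2) (m1 + m2) η φ
      = rhoLM n q qm d A l1 m1 η φ * rhoLM n q qm d A l2 m2 η φ := by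
  unfold rhoLM
  simp only [Pi.add_apply]
  rw [stmt7_sum_split n (fun i => φ i - η i) (fun i j => d i * A i j) l1 l2,
      stmt7_sum_split n (fun i => η i + φ i) (fun i j => d i * A i j) m1 m2,
      stmt7_prod_split n qm (fun j => φ j + η j) l1 l2, zpow_add, zpow_add,
      mul_mul_mul_comm (q ^ _) (q ^ _), mul_mul_mul_comm (q ^ _ * _) (q ^ _ * _)]

private lemma stmt7_keyq (hind : ∀ (a : ℤ) (b : Fin n → Fin n → ℤ),
      q ^ a * ∏ i, ∏ j, (if i < j then qm i j ^ b i j else 1) = 1 →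
      a = 0 ∧ ∀ i j, i < j → b i j = 0) :
    ∀ a b : ℤ, q ^ a = q ^ b → a = b := by
  intro a b hab
  have : q ^ (a - b) = 1 := by rw [zpow_sub, hab, mul_inv_cancel]
  have := (hind (a - b) 0 (by simpa using this)).1
  omega

private lemma stmt7_keyv (d : Fin n → ℤ) (A : Matrix (Fin n) (Fin n) ℤ)
    (hDA : (Matrix.of fun i j => d i * A i j).det ≠ 0) (v : Fin n → ℤ)
    (hv : ∀ mu : Fin n → ℤ, (∑ i, ∑ j, v i * (d i * A i j * mu j)) = 0) : v = 0 := by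
  have hk : ∀ k, (∑ i, v i * (d i * A i k)) = 0 := by
    intro k
    have := hv (Pi.single k 1)
    simpa [Pi.single_apply, mul_ite, Finset.mul_sum] using this
  refine Matrix.eq_zero_of_vecMul_eq_zero hDA ?_
  funext k
  simpa [Matrix.vecMul, dotProduct, mul_comm] using hk k

private lemma stmt7_rho_inj (hind : ∀ (a : ℤ) (b : Fin n → Fin n → ℤ),
      q ^ a * ∏ i, ∏ j, (if i < j then qm i j ^ b i j else 1) = 1 →
      a = 0 ∧ ∀ i j, i < j → b i j = 0)
    (d : Fin n → ℤ) (A : Matrix (Fin n) (Fin n) ℤ)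
    (hDA : (Matrix.of fun i j => d i * A i j).det ≠ 0)
    (η φ η' φ' : Fin n → ℤ)
    (hr : ∀ lam mu : Fin n → ℤ,
      rhoLM n q qm d A lam mu η φ = rhoLM n q qm d A lam mu η' φ') :
    η = η' ∧ φ = φ' := by
  have hA : ∀ i, η i + φ i = η' i + φ' i := by
    have h1 : ∀ mu : Fin n → ℤ,
        q ^ (∑ i, ∑ j, (η i + φ i) * (d i * A i j * mu j))
          = q ^ (∑ i, ∑ j, (η' i + φ' i) * (d i * A i j * mu j)) := by
      intro mu
      have := hr 0 mu
      simpa [rhoLM] using this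
    have h2 : ∀ mu : Fin n → ℤ,
        (∑ i, ∑ j, ((η i + φ i) - (η' i + φ' i)) * (d i * A i j * mu j)) = 0 := by
      intro mu
      have := stmt7_keyq hind _ _ (h1 mu)
      simp only [sub_mul, Finset.sum_sub_distrib]
      omega
    have := stmt7_keyv d A hDA _ h2
    intro i
    have := congrFun this i
    simpa [sub_eq_zero] using this
  have hB : ∀ i, φ i - η i = φ' i - η' i := by
    have h1 : ∀ lam : Fin n → ℤ,
        q ^ (∑ i, ∑ j, (φ i - η i) * (d i * A i j * lam j))
          = q ^ (∑ i, ∑ j, (φ' i - η' i) * (d i * A i j * lam j)) := by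
      intro lam
      have h0 := hr lam 0
      simp only [rhoLM, Pi.zero_apply, mul_zero, Finset.sum_const_zero, zpow_zero,
        mul_one] at h0
      have hP : (∏ i, ∏ j, qm i j ^ (-(lam i) * (φ j + η j)))
          = ∏ i, ∏ j, qm i j ^ (-(lam i) * (φ' j + η' j)) := by
        refine Finset.prod_congr rfl fun i _ => Finset.prod_congr rfl fun j _ => ?_
        have hj : φ j + η j = φ' j + η' j := by have := hA j; omega
        rw [hj]
      rw [hP] at h0
      exact mul_right_cancel h0
    have h2 : ∀ lam : Fin n → ℤ,
        (∑ i, ∑ j, ((φ i - η i) - (φ' i - η' i)) * (d i * A i j * lam j)) = 0 := by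
      intro lam
      have := stmt7_keyq hind _ _ (h1 lam)
      simp only [sub_mul, Finset.sum_sub_distrib] at this ⊢
      omega
    have := stmt7_keyv d A hDA _ h2
    intro i
    have := congrFun this i
    simpa [sub_eq_zero] using this
  constructor <;> funext i <;> (have := hA i; have := hB i; omega)

end Aux

/-- if a finite sum `u = Σ k_{η,φ} ω'_η ω_φ` in the group algebra of `ℤⁿ × ℤⁿ`
satisfies `ϱ^{λ,μ}(u) = 0` for all `λ, μ`, then `u = 0`. -/
theorem stmt7 {K : Type*} [Field K] (n : ℕ) (q : Kˣ) (qm : Fin n → Fin n → Kˣ)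
    (hqdiag : ∀ i, qm i i = 1) (hqskew : ∀ i j, qm i j * qm j i = 1)
    (hind : ∀ (a : ℤ) (b : Fin n → Fin n → ℤ),
      q ^ a * ∏ i, ∏ j, (if i < j then qm i j ^ b i j else 1) = 1 →
      a = 0 ∧ ∀ i j, i < j → b i j = 0)
    (d : Fin n → ℤ) (hd : ∀ i, 0 < d i)
    (A : Matrix (Fin n) (Fin n) ℤ) (hsym : ∀ i j, d i * A i j = d j * A j i)
    (hDA : (Matrix.of fun i j => d i * A i j).det ≠ 0)
    (u : AddMonoidAlgebra K ((Fin n → ℤ) × (Fin n → ℤ)))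
    (h : ∀ lam mu : Fin n → ℤ,
      (u.coeff.sum fun p c => c * ((rhoLM n q qm d A lam mu p.1 p.2 : Kˣ) : K)) = 0) :
    u = 0 := by
  classical
  let χU : ((Fin n → ℤ) × (Fin n → ℤ)) →
      (Multiplicative ((Fin n → ℤ) × (Fin n → ℤ)) →* Kˣ) := fun p =>
    MonoidHom.mk' (fun x => rhoLM n q qm d A x.toAdd.1 x.toAdd.2 p.1 p.2)
      (fun x y => stmt7_rhoLM_mul n q qm d A x.toAdd.1 y.toAdd.1 x.toAdd.2 y.toAdd.2 p.1 p.2)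
  let χ : ((Fin n → ℤ) × (Fin n → ℤ)) →
      (Multiplicative ((Fin n → ℤ) × (Fin n → ℤ)) →* K) := fun p =>
    (Units.coeHom K).comp (χU p)
  have hinj : Function.Injective χ := by
    intro p p' hpp
    have key : ∀ lam mu : Fin n → ℤ,
        rhoLM n q qm d A lam mu p.1 p.2 = rhoLM n q qm d A lam mu p'.1 p'.2 := by
      intro lam mu
      have := DFunLike.congr_fun hpp (Multiplicative.ofAdd (lam, mu))
      exact Units.ext this
    obtain ⟨h1, h2⟩ := stmt7_rho_inj hind d A hDA p.1 p.2 p'.1 p'.2 key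
    exact Prod.ext h1 h2
  set v : (Multiplicative ((Fin n → ℤ) × (Fin n → ℤ)) →* K) →₀ K :=
    Finsupp.mapDomain χ u.coeff with hvdef
  have hv0 : Finsupp.linearCombination K
      (fun f : Multiplicative ((Fin n → ℤ) × (Fin n → ℤ)) →* K => (f : _ → K)) v = 0 := by
    rw [Finsupp.linearCombination_apply]
    funext x
    have e1 : (v.sum fun f c => c • (f : _ → K)) x = v.sum fun f c => c * f x := by
      rw [Finsupp.sum_apply']
      simp [smul_eq_mul]
    have e2 : (v.sum fun f c => c * f x) = u.coeff.sum fun p c => c * χ p x := by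
      rw [hvdef]
      exact Finsupp.sum_mapDomain_index (by simp) (by intro b m1 m2; ring)
    have e3 : (u.coeff.sum fun p c => c * χ p x) = 0 := h x.toAdd.1 x.toAdd.2
    simp only [Pi.zero_apply]
    rw [e1, e2, e3]
  have hv : v = 0 := linearIndependent_iff.mp
    (linearIndependent_monoidHom (Multiplicative ((Fin n → ℤ) × (Fin n → ℤ))) K) v hv0
  have : Finsupp.mapDomain χ u.coeff = Finsupp.mapDomain χ 0 := by
    rw [← hvdef, hv, Finsupp.mapDomain_zero]
  exact AddMonoidAlgebra.coeff_eq_zero.mp (Finsupp.mapDomain_injective hinj this)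
end

section
/- Let H be a Hopf algebra, M a finite-dimensional H-module, and Θ ∈ End(M) invertible with Θ ∘ u = S²(u) ∘ Θ for all u ∈ H. Define t ∈ H* by t(v) = tr_M(v ∘ Θ). Then t is invariant under the (left-adjoint-transpose) action: (x · t)(u) := t(ad_l(S(x)) u) satisfies x · t = ε(x) t for all x ∈ H. -/
open TensorProduct Coalgebra HopfAlgebra

noncomputable section Stmt14Aux

variable {K : Type*} {H : Type*} [CommRing K] [Ring H] [HopfAlgebra K H]
variable {B : Type*} [Ring B] [Algebra K B]

/-- Convolution product on linear maps from a coalgebra to an algebra. -/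
def convP (f g : H →ₗ[K] B) : H →ₗ[K] B :=
  LinearMap.mul' K B ∘ₗ TensorProduct.map f g ∘ₗ Coalgebra.comul

/-- Convolution unit. -/
def convU : H →ₗ[K] B := Algebra.linearMap K B ∘ₗ Coalgebra.counit

lemma convU_apply (x : H) : (convU (K := K) (H := H) (B := B)) x
    = algebraMap K B (Coalgebra.counit (R := K) x) := rfl

lemma convP_repr (f g : H →ₗ[K] B) (x : H) (r : Coalgebra.Repr K x (H × H)) :
    convP f g x = ∑ i ∈ r.index, f (r.left i) * g (r.right i) := by
  have h : convP f g x = LinearMap.mul' K B (TensorProduct.map f g (Coalgebra.comul x)) := rfl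
  rw [h, ← r.eq, map_sum, map_sum]
  simp

lemma convP_convU_right (f : H →ₗ[K] B) : convP f convU = f := by
  ext x
  have key := Coalgebra.sum_tmul_counit_eq (R := K) (ℛ K x)
  have := congrArg ((TensorProduct.rid K B).toLinearMap ∘ₗ
    TensorProduct.map f (LinearMap.id (R := K) (M := K))) key
  simp only [map_sum, LinearMap.comp_apply, TensorProduct.map_tmul, LinearMap.id_coe, id_eq,
    LinearEquiv.coe_coe, TensorProduct.rid_tmul, one_smul] at this
  rw [convP_repr f convU x (ℛ K x)]
  calc ∑ i ∈ (ℛ K x).index, f ((ℛ K x).left i) * convU ((ℛ K x).right i)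
      = ∑ i ∈ (ℛ K x).index,
        Coalgebra.counit (R := K) ((ℛ K x).right i) • f ((ℛ K x).left i) := by
        refine Finset.sum_congr rfl fun i _ => ?_
        rw [convU_apply, ← Algebra.commutes, ← Algebra.smul_def]
    _ = f x := this

lemma convP_convU_left (f : H →ₗ[K] B) : convP convU f = f := by
  ext x
  have key := Coalgebra.sum_counit_tmul_eq (R := K) (ℛ K x)
  have := congrArg ((TensorProduct.lid K B).toLinearMap ∘ₗ
    TensorProduct.map (LinearMap.id (R := K) (M := K)) f) key
  simp only [map_sum, LinearMap.comp_apply, TensorProduct.map_tmul, LinearMap.id_coe, id_eq,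
    LinearEquiv.coe_coe, TensorProduct.lid_tmul, one_smul] at this
  rw [convP_repr convU f x (ℛ K x)]
  calc ∑ i ∈ (ℛ K x).index, convU ((ℛ K x).left i) * f ((ℛ K x).right i)
      = ∑ i ∈ (ℛ K x).index,
        Coalgebra.counit (R := K) ((ℛ K x).left i) • f ((ℛ K x).right i) := by
        refine Finset.sum_congr rfl fun i _ => ?_
        rw [convU_apply, ← Algebra.smul_def]
    _ = f x := this

lemma convP_assoc (f g h : H →ₗ[K] B) : convP (convP f g) h = convP f (convP g h) := by
  ext x
  have key := Coalgebra.sum_map_tmul_tmul_eq (R := K) (A := H) (B := B) f g h x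
    (repr := ℛ K x) (a₁ := fun i => ℛ K ((ℛ K x).left i))
    (a₂ := fun i => ℛ K ((ℛ K x).right i))
  have key2 := congrArg (LinearMap.mul' K B ∘ₗ LinearMap.lTensor B (LinearMap.mul' K B)) key
  simp only [map_sum, LinearMap.comp_apply, LinearMap.lTensor_tmul, LinearMap.mul'_apply] at key2
  rw [convP_repr (convP f g) h x (ℛ K x), convP_repr f (convP g h) x (ℛ K x)]
  have l1 : ∀ i, convP f g ((ℛ K x).left i) =
      ∑ j ∈ (ℛ K ((ℛ K x).left i)).index,
        f ((ℛ K ((ℛ K x).left i)).left j) * g ((ℛ K ((ℛ K x).left i)).right j) :=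
    fun i => convP_repr f g _ _
  have l2 : ∀ i, convP g h ((ℛ K x).right i) =
      ∑ j ∈ (ℛ K ((ℛ K x).right i)).index,
        g ((ℛ K ((ℛ K x).right i)).left j) * h ((ℛ K ((ℛ K x).right i)).right j) :=
    fun i => convP_repr g h _ _
  simp only [l1, l2, Finset.sum_mul, Finset.mul_sum, mul_assoc]
  exact key2.symm

lemma convP_inv_unique (f g h : H →ₗ[K] B) (h1 : convP f g = convU) (h2 : convP g h = convU) :
    f = h := by
  have : convP f (convP g h) = convP (convP f g) h := (convP_assoc f g h).symm
  rw [h1, h2, convP_convU_right, convP_convU_left] at this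
  exact this

/-- `x ↦ Σ S(x₂) ⊗ S(x₁)`. -/
def acomul : H →ₗ[K] H ⊗[K] H :=
  (TensorProduct.comm K H H).toLinearMap ∘ₗ
    TensorProduct.map (antipode (R := K)) (antipode (R := K)) ∘ₗ Coalgebra.comul

lemma acomul_repr (x : H) (r : Coalgebra.Repr K x (H × H)) :
    acomul (K := K) x = ∑ i ∈ r.index,
      antipode (R := K) (r.right i) ⊗ₜ[K] antipode (R := K) (r.left i) := by
  have h : acomul (K := K) x = (TensorProduct.comm K H H)
      (TensorProduct.map (antipode (R := K)) (antipode (R := K)) (Coalgebra.comul x)) := rfl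
  rw [h, ← r.eq, map_sum, map_sum]
  simp

lemma convP_comulS_comul :
    convP ((Coalgebra.comul : H →ₗ[K] H ⊗[K] H) ∘ₗ antipode (R := K)) Coalgebra.comul
      = convU := by
  ext x
  rw [convP_repr _ _ x (ℛ K x), convU_apply]
  calc ∑ i ∈ (ℛ K x).index,
        (Coalgebra.comul ∘ₗ antipode (R := K)) ((ℛ K x).left i) *
          Coalgebra.comul ((ℛ K x).right i)
      = Coalgebra.comul (R := K)
          (∑ i ∈ (ℛ K x).index, antipode (R := K) ((ℛ K x).left i) * (ℛ K x).right i) := by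
        rw [map_sum]
        exact Finset.sum_congr rfl fun i _ => (Bialgebra.comul_mul _ _).symm
    _ = algebraMap K (H ⊗[K] H) (Coalgebra.counit (R := K) x) := by
        rw [HopfAlgebra.sum_antipode_mul_eq_algebraMap_counit, Bialgebra.comul_algebraMap]

lemma inner_collapse (a d : H) (ρ : Coalgebra.Repr K a (H × H)) :
    ∑ j ∈ ρ.index, Coalgebra.comul (R := K) (ρ.left j) *
      (antipode (R := K) d ⊗ₜ[K] antipode (R := K) (ρ.right j))
    = (a * antipode (R := K) d) ⊗ₜ[K] (1 : H) := by
  set S : H →ₗ[K] H := antipode (R := K) with hS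
  have key := Coalgebra.sum_tmul_tmul_eq (R := K) ρ
    (fun j => ℛ K (ρ.left j)) (fun j => ℛ K (ρ.right j))
  set W : H ⊗[K] (H ⊗[K] H) →ₗ[K] H ⊗[K] H :=
    TensorProduct.map (LinearMap.mulRight K (S d)) (LinearMap.mul' K H ∘ₗ LinearMap.lTensor H S)
    with hW
  have hWapp : ∀ α β γ : H, W (α ⊗ₜ (β ⊗ₜ γ)) = (α * S d) ⊗ₜ[K] (β * S γ) := by
    intro α β γ
    simp [hW]
  have key2 := congrArg W key
  simp only [map_sum, hWapp] at key2
  calc ∑ j ∈ ρ.index, Coalgebra.comul (R := K) (ρ.left j) * (S d ⊗ₜ[K] S (ρ.right j))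
      = ∑ j ∈ ρ.index, ∑ l ∈ (ℛ K (ρ.left j)).index,
          ((ℛ K (ρ.left j)).left l * S d) ⊗ₜ[K] ((ℛ K (ρ.left j)).right l * S (ρ.right j)) := by
        refine Finset.sum_congr rfl fun j _ => ?_
        rw [← (ℛ K (ρ.left j)).eq, Finset.sum_mul]
        exact Finset.sum_congr rfl fun l _ => by
          rw [Algebra.TensorProduct.tmul_mul_tmul]
    _ = ∑ j ∈ ρ.index, ∑ l ∈ (ℛ K (ρ.right j)).index,
          (ρ.left j * S d) ⊗ₜ[K] ((ℛ K (ρ.right j)).left l * S ((ℛ K (ρ.right j)).right l)) :=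
        key2
    _ = ∑ j ∈ ρ.index, (ρ.left j * S d) ⊗ₜ[K]
          (algebraMap K H (Coalgebra.counit (R := K) (ρ.right j))) := by
        refine Finset.sum_congr rfl fun j _ => ?_
        rw [← TensorProduct.tmul_sum, HopfAlgebra.sum_mul_antipode_eq_algebraMap_counit]
    _ = ∑ j ∈ ρ.index, Coalgebra.counit (R := K) (ρ.right j) •
          ((ρ.left j * S d) ⊗ₜ[K] (1 : H)) := by
        refine Finset.sum_congr rfl fun j _ => ?_
        rw [Algebra.algebraMap_eq_smul_one, TensorProduct.tmul_smul]
    _ = ((∑ j ∈ ρ.index, Coalgebra.counit (R := K) (ρ.right j) • ρ.left j) * S d)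
          ⊗ₜ[K] (1 : H) := by
        rw [Finset.sum_mul, TensorProduct.sum_tmul]
        refine Finset.sum_congr rfl fun j _ => ?_
        rw [smul_mul_assoc, TensorProduct.smul_tmul']
    _ = (a * S d) ⊗ₜ[K] (1 : H) := by
        have key3 := congrArg (TensorProduct.rid K H)
          (Coalgebra.sum_tmul_counit_eq (R := K) ρ)
        simp only [map_sum, TensorProduct.rid_tmul, one_smul] at key3
        rw [key3]

lemma convP_comul_acomul :
    convP (Coalgebra.comul : H →ₗ[K] H ⊗[K] H) acomul = convU := by
  ext x
  set S : H →ₗ[K] H := antipode (R := K) with hS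
  have key := Coalgebra.sum_tmul_tmul_eq (R := K) (ℛ K x)
    (fun i => ℛ K ((ℛ K x).left i)) (fun i => ℛ K ((ℛ K x).right i))
  set G : H ⊗[K] (H ⊗[K] H) →ₗ[K] H ⊗[K] H :=
    LinearMap.mul' K (H ⊗[K] H) ∘ₗ TensorProduct.map Coalgebra.comul
      ((TensorProduct.comm K H H).toLinearMap ∘ₗ TensorProduct.map S S) with hG
  have hGapp : ∀ α β γ : H, G (α ⊗ₜ (β ⊗ₜ γ)) =
      Coalgebra.comul (R := K) α * (S γ ⊗ₜ[K] S β) := by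
    intro α β γ
    simp [hG]
  have key2 := congrArg G key
  simp only [map_sum, hGapp] at key2
  rw [convP_repr _ _ x (ℛ K x), convU_apply]
  calc ∑ i ∈ (ℛ K x).index,
        Coalgebra.comul (R := K) ((ℛ K x).left i) * acomul ((ℛ K x).right i)
      = ∑ i ∈ (ℛ K x).index, ∑ j ∈ (ℛ K ((ℛ K x).right i)).index,
          Coalgebra.comul (R := K) ((ℛ K x).left i) *
            (S ((ℛ K ((ℛ K x).right i)).right j) ⊗ₜ[K] S ((ℛ K ((ℛ K x).right i)).left j)) := by
        refine Finset.sum_congr rfl fun i _ => ?_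
        rw [acomul_repr _ (ℛ K ((ℛ K x).right i)), Finset.mul_sum]
    _ = ∑ i ∈ (ℛ K x).index, ∑ j ∈ (ℛ K ((ℛ K x).left i)).index,
          Coalgebra.comul (R := K) ((ℛ K ((ℛ K x).left i)).left j) *
            (S ((ℛ K x).right i) ⊗ₜ[K] S ((ℛ K ((ℛ K x).left i)).right j)) := key2.symm
    _ = ∑ i ∈ (ℛ K x).index,
          ((ℛ K x).left i * S ((ℛ K x).right i)) ⊗ₜ[K] (1 : H) := by
        refine Finset.sum_congr rfl fun i _ => ?_
        exact inner_collapse ((ℛ K x).left i) ((ℛ K x).right i) (ℛ K ((ℛ K x).left i))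
    _ = algebraMap K (H ⊗[K] H) (Coalgebra.counit (R := K) x) := by
        rw [← TensorProduct.sum_tmul, HopfAlgebra.sum_mul_antipode_eq_algebraMap_counit,
          Algebra.TensorProduct.algebraMap_apply]

/-- The antipode is an anti-coalgebra morphism. -/
lemma comul_antipode' (x : H) :
    Coalgebra.comul (R := K) (antipode (R := K) x) = acomul (K := K) x := by
  have := convP_inv_unique ((Coalgebra.comul : H →ₗ[K] H ⊗[K] H) ∘ₗ antipode (R := K))
    Coalgebra.comul acomul convP_comulS_comul convP_comul_acomul
  exact LinearMap.congr_fun this x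

end Stmt14Aux

/-- The left adjoint action `ad_l(x)(z) = Σ x_{(1)} z S(x_{(2)})` in a Hopf algebra. -/
noncomputable def adl (K : Type*) {H : Type*} [CommRing K] [Ring H] [HopfAlgebra K H]
    (x z : H) : H :=
  LinearMap.mul' K H
    ((TensorProduct.map (LinearMap.mulRight K z) (HopfAlgebra.antipode (R := K)))
      (Coalgebra.comul (R := K) x))

/-- if `Θ` is an invertible endomorphism of a finite-dimensional module `M`
intertwining the action with `S²`, then `t(v) = tr_M(v ∘ Θ)` satisfies
`(x·t)(u) = t(ad_l(S(x)) u) = ε(x) t(u)`. -/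
theorem stmt14 {K H M : Type*} [Field K] [Ring H] [HopfAlgebra K H]
    [AddCommGroup M] [Module K M] [FiniteDimensional K M]
    (φ : H →ₐ[K] Module.End K M) (Θ : Module.End K M)
    (hΘinv : Function.Bijective Θ)
    (hΘ : ∀ u : H, Θ ∘ₗ φ u =
      φ (HopfAlgebra.antipode (R := K) (HopfAlgebra.antipode (R := K) u)) ∘ₗ Θ) :
    ∀ x u : H,
      LinearMap.trace K M (φ (adl K (HopfAlgebra.antipode (R := K) x) u) ∘ₗ Θ) =
      Coalgebra.counit (R := K) x * LinearMap.trace K M (φ u ∘ₗ Θ) := by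
  intro x u
  set S : H →ₗ[K] H := HopfAlgebra.antipode (R := K) with hS
  set r := ℛ K x with hr
  have hadl : adl K (S x) u = ∑ i ∈ r.index, (S (r.right i) * u) * S (S (r.left i)) := by
    have h1 : adl K (S x) u = LinearMap.mul' K H
        ((TensorProduct.map (LinearMap.mulRight K u) S) (Coalgebra.comul (R := K) (S x))) := rfl
    rw [h1, comul_antipode', acomul_repr _ r, map_sum, map_sum]
    simp
    rfl
  have hcomp : ∀ A B : Module.End K M, A ∘ₗ B = A * B := fun _ _ => rfl
  have step : ∀ i ∈ r.index,
      LinearMap.trace K M (φ ((S (r.right i) * u) * S (S (r.left i))) * Θ) =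
      LinearMap.trace K M (φ (r.left i * S (r.right i)) * (φ u * Θ)) := by
    intro i _
    have h3 : φ (S (S (r.left i))) * Θ = Θ * φ (r.left i) := by
      rw [← hcomp, ← hcomp]; exact (hΘ (r.left i)).symm
    have e1 : φ ((S (r.right i) * u) * S (S (r.left i))) * Θ =
        ((φ (S (r.right i)) * φ u) * Θ) * φ (r.left i) := by
      rw [map_mul, map_mul, mul_assoc, h3]
      simp only [mul_assoc]
    have e2 : φ (r.left i * S (r.right i)) * (φ u * Θ) =
        φ (r.left i) * ((φ (S (r.right i)) * φ u) * Θ) := by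
      rw [map_mul]
      simp only [mul_assoc]
    rw [e1, e2]
    exact LinearMap.trace_mul_comm _ _ _
  calc LinearMap.trace K M (φ (adl K (S x) u) ∘ₗ Θ)
      = ∑ i ∈ r.index,
          LinearMap.trace K M (φ ((S (r.right i) * u) * S (S (r.left i))) * Θ) := by
        rw [hcomp, hadl, map_sum, Finset.sum_mul, map_sum]
    _ = ∑ i ∈ r.index,
          LinearMap.trace K M (φ (r.left i * S (r.right i)) * (φ u * Θ)) :=
        Finset.sum_congr rfl step
    _ = LinearMap.trace K M (φ (∑ i ∈ r.index, r.left i * S (r.right i)) * (φ u * Θ)) := by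
        rw [map_sum, Finset.sum_mul, map_sum]
    _ = Coalgebra.counit (R := K) x * LinearMap.trace K M (φ u ∘ₗ Θ) := by
        rw [hS, HopfAlgebra.sum_mul_antipode_eq_algebraMap_counit, AlgHom.commutes,
          Algebra.algebraMap_eq_smul_one, smul_mul_assoc, one_mul, map_smul, smul_eq_mul, hcomp]
end

section
/- Under the hypotheses of the Harish-Chandra setup for U_{q,G}(g): for λ ∈ Λ^+ ∩ Q, the Harish-Chandra image of the central element z_λ is ξ(z_λ) = Σ_{μ ≤ λ} dim(L(λ)_μ) ω'_μ ω_{-μ}, obtained from z_λ^0 = Σ_{μ≤λ} q^{-2(ρ,μ)} dim(L(λ)_μ) ω'_μ ω_{-μ} by applying the shift γ^{-ρ}(ω'_η ω_φ) = ϱ^{-ρ}(ω'_η ω_φ) ω'_η ω_φ, using ϱ^{-ρ}(ω'_μ ω_{-μ}) = q^{2(ρ,μ)}. -/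
/-- `ϱ^{λ}(ω'_η ω_φ) = q^{(φ-η)ᵀDAλ} ∏_{i,j} q_{ij}^{-λ_i(η+φ)_j}`. -/
noncomputable def rhoL {K : Type*} [Field K] (n : ℕ) (q : Kˣ) (qm : Fin n → Fin n → Kˣ)
    (d : Fin n → ℤ) (A : Matrix (Fin n) (Fin n) ℤ) (lam η φ : Fin n → ℤ) : Kˣ :=
  q ^ (∑ i, ∑ j, (φ i - η i) * (d i * A i j * lam j)) *
    ∏ i, ∏ j, qm i j ^ (-(lam i) * (η j + φ j))

/-- `ϱ^{-ρ}(ω'_μ ω_{-μ}) = q^{2(ρ,μ)}`, and applying the shift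
`γ^{-ρ}(ω'_η ω_φ) = ϱ^{-ρ}(ω'_η ω_φ) ω'_η ω_φ` to
`z_λ⁰ = Σ_{μ≤λ} q^{-2(ρ,μ)} dim(L(λ)_μ) ω'_μ ω_{-μ}` yields
`ξ(z_λ) = Σ_{μ≤λ} dim(L(λ)_μ) ω'_μ ω_{-μ}`. -/
theorem stmt19 {K : Type*} [Field K] (n : ℕ) (q : Kˣ) (qm : Fin n → Fin n → Kˣ)
    (hqdiag : ∀ i, qm i i = 1) (hqskew : ∀ i j, qm i j * qm j i = 1)
    (d : Fin n → ℤ) (hd : ∀ i, 0 < d i)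
    (A : Matrix (Fin n) (Fin n) ℤ) (hsym : ∀ i j, d i * A i j = d j * A j i)
    (ρ : Fin n → ℤ)
    (rp : (Fin n → ℤ) → ℤ) (hrp : ∀ μ, rp μ = ∑ i, ∑ j, ρ i * (d i * A i j * μ j))
    (Fs : Finset (Fin n → ℤ)) (dimL : (Fin n → ℤ) → ℕ)
    (z0 : ((Fin n → ℤ) × (Fin n → ℤ)) →₀ K)
    (hz0 : z0 = ∑ μ ∈ Fs,
      (((q ^ (-(2 * rp μ)) : Kˣ) : K) * (dimL μ : K)) • Finsupp.single (μ, -μ) (1 : K))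
    (γ : (((Fin n → ℤ) × (Fin n → ℤ)) →₀ K) → (((Fin n → ℤ) × (Fin n → ℤ)) →₀ K))
    (hγ : ∀ x, γ x = x.sum fun p c =>
      c • (((rhoL n q qm d A (-ρ) p.1 p.2 : Kˣ) : K) • Finsupp.single p (1 : K))) :
    (∀ μ : Fin n → ℤ, rhoL n q qm d A (-ρ) μ (-μ) = q ^ (2 * rp μ)) ∧
    γ z0 = ∑ μ ∈ Fs, ((dimL μ : K)) • Finsupp.single (μ, -μ) (1 : K) := by
  have key : ∀ μ : Fin n → ℤ, rhoL n q qm d A (-ρ) μ (-μ) = q ^ (2 * rp μ) := by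
    intro μ
    unfold rhoL
    have h1 : (∏ i, ∏ j, qm i j ^ (-((-ρ) i) * (μ j + (-μ) j))) = 1 := by
      simp
    rw [h1, mul_one]
    congr 1
    rw [hrp μ, Finset.mul_sum, Finset.sum_comm]
    simp_rw [Finset.mul_sum]
    apply Finset.sum_congr rfl; intro i _
    apply Finset.sum_congr rfl; intro j _
    simp only [Pi.neg_apply]
    rw [show d j * A j i = d i * A i j from (hsym i j).symm]
    ring
  refine ⟨key, ?_⟩
  set v : ((Fin n → ℤ) × (Fin n → ℤ)) → (((Fin n → ℤ) × (Fin n → ℤ)) →₀ K) :=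
    fun p => ((rhoL n q qm d A (-ρ) p.1 p.2 : Kˣ) : K) • Finsupp.single p (1 : K) with hv
  have hγ' : γ z0 = Finsupp.linearCombination K v z0 := by
    rw [hγ, Finsupp.linearCombination_apply]
  rw [hγ', hz0, map_sum]
  apply Finset.sum_congr rfl
  intro μ _
  rw [map_smul, Finsupp.linearCombination_single, one_smul, hv]
  simp only [key μ, smul_smul]
  congr 1
  have : ((q ^ (-(2 * rp μ)) : Kˣ) : K) * ((q ^ (2 * rp μ) : Kˣ) : K) = 1 := by
    rw [← Units.val_mul, ← zpow_add, neg_add_cancel, zpow_zero, Units.val_one]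
  calc ((q ^ (-(2 * rp μ)) : Kˣ) : K) * (dimL μ : K) * ((q ^ (2 * rp μ) : Kˣ) : K)
      = ((q ^ (-(2 * rp μ)) : Kˣ) : K) * ((q ^ (2 * rp μ) : Kˣ) : K) * (dimL μ : K) := by ring
    _ = dimL μ := by rw [this, one_mul]
end
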